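/- Let n, p, q be positive integers with 2n ≤ p and 2n ≤ q. Suppose A, A' are complex p×n matrices of rank n and B, B' are complex q×n matrices of rank n, and suppose A·Bᵀ = A'·B'ᵀ. Then there exists a unique invertible n×n complex matrix g such that A' = A·g and B' = B·(g⁻¹)ᵀ. (Thus the fiber of φ' over a full-rank point is a single orbit of GL(n,ℂ) on which GL(n,ℂ) acts freely.) -/

import Mathlib

open Matrix

/-- A matrix of full column rank has a left inverse. -/
lemma exists_left_inv_of_rank_eq {m n : ℕ} (M : Matrix (Fin m) (Fin n) ℂ)
    (h : M.rank = n) : ∃ L : Matrix (Fin n) (Fin m) ℂ, L * M = 1 := by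
  have hr : Mᵀ.rank = n := by rw [Matrix.rank_transpose, h]
  have hsurj : Function.Surjective Mᵀ.mulVec := by
    have htop : LinearMap.range Mᵀ.mulVecLin = ⊤ := by
      apply Submodule.eq_top_of_finrank_eq
      rw [show Module.finrank ℂ (LinearMap.range Mᵀ.mulVecLin) = Mᵀ.rank from rfl, hr]
      simp [Module.finrank_pi]
    intro y
    have : y ∈ LinearMap.range Mᵀ.mulVecLin := htop ▸ Submodule.mem_top
    obtain ⟨x, hx⟩ := this
    exact ⟨x, hx⟩
  obtain ⟨C, hC⟩ := Matrix.mulVec_surjective_iff_exists_right_inverse.mp hsurj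
  refine ⟨Cᵀ, ?_⟩
  have := congrArg Matrix.transpose hC
  rwa [Matrix.transpose_mul, Matrix.transpose_one] at this

/-- Lemma B.2(ii) for the dual pair (Sp(2n,ℝ), O(p,q)):
the fiber of φ'(A,B) = A·Bᵀ over a full-rank point is a single free
orbit of K_ℂ = GL(n,ℂ), acting by g·(A,B) = (A·g, B·(g⁻¹)ᵀ). -/
theorem stmt_1 (n p q : ℕ) (hn : 0 < n) (hp : 0 < p) (hq : 0 < q)
    (hnp : 2 * n ≤ p) (hnq : 2 * n ≤ q)
    (A A' : Matrix (Fin p) (Fin n) ℂ) (B B' : Matrix (Fin q) (Fin n) ℂ)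
    (hA : A.rank = n) (hA' : A'.rank = n) (hB : B.rank = n) (hB' : B'.rank = n)
    (h : A * Bᵀ = A' * B'ᵀ) :
    ∃! g : Matrix (Fin n) (Fin n) ℂ,
      IsUnit g ∧ A' = A * g ∧ B' = B * (g⁻¹)ᵀ := by
  obtain ⟨LA, hLA⟩ := exists_left_inv_of_rank_eq A hA
  obtain ⟨LA', hLA'⟩ := exists_left_inv_of_rank_eq A' hA'
  obtain ⟨LB, hLB⟩ := exists_left_inv_of_rank_eq B hB
  obtain ⟨LB', hLB'⟩ := exists_left_inv_of_rank_eq B' hB'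
  -- cancellation by A on the left
  have cancelA : ∀ X Y : Matrix (Fin n) (Fin n) ℂ, A * X = A * Y → X = Y := by
    intro X Y hXY
    have := congrArg (LA * ·) hXY
    simpa [← Matrix.mul_assoc, hLA] using this
  have cancelA' : ∀ X Y : Matrix (Fin n) (Fin n) ℂ, A' * X = A' * Y → X = Y := by
    intro X Y hXY
    have := congrArg (LA' * ·) hXY
    simpa [← Matrix.mul_assoc, hLA'] using this
  -- the candidate g and its inverse k
  set g : Matrix (Fin n) (Fin n) ℂ := Bᵀ * LB'ᵀ with hg
  set k : Matrix (Fin n) (Fin n) ℂ := B'ᵀ * LBᵀ with hk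
  have hBB' : B'ᵀ * LB'ᵀ = 1 := by
    have := congrArg Matrix.transpose hLB'
    rwa [Matrix.transpose_mul, Matrix.transpose_one] at this
  have hBB : Bᵀ * LBᵀ = 1 := by
    have := congrArg Matrix.transpose hLB
    rwa [Matrix.transpose_mul, Matrix.transpose_one] at this
  have hAg : A' = A * g := by
    calc A' = A' * (B'ᵀ * LB'ᵀ) := by rw [hBB']; simp
    _ = (A' * B'ᵀ) * LB'ᵀ := by rw [Matrix.mul_assoc]
    _ = (A * Bᵀ) * LB'ᵀ := by rw [h]
    _ = A * g := by rw [Matrix.mul_assoc, hg]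
  have hAk : A = A' * k := by
    calc A = A * (Bᵀ * LBᵀ) := by rw [hBB]; simp
    _ = (A * Bᵀ) * LBᵀ := by rw [Matrix.mul_assoc]
    _ = (A' * B'ᵀ) * LBᵀ := by rw [h]
    _ = A' * k := by rw [Matrix.mul_assoc, hk]
  have hgk : g * k = 1 := by
    apply cancelA
    rw [← Matrix.mul_assoc, ← hAg, ← hAk, Matrix.mul_one]
  have hkg : k * g = 1 := by
    apply cancelA'
    rw [← Matrix.mul_assoc, ← hAk, ← hAg, Matrix.mul_one]
  have hunit : IsUnit g := (Matrix.isUnit_iff_isUnit_det g).mpr (Matrix.isUnit_det_of_right_inverse hgk)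
  have hginv : g⁻¹ = k := Matrix.inv_eq_right_inv hgk
  -- Bᵀ = g * B'ᵀ
  have hBg : Bᵀ = g * B'ᵀ := by
    have h2 : A * Bᵀ = A * (g * B'ᵀ) := by
      rw [← Matrix.mul_assoc, ← hAg, h]
    have := congrArg (LA * ·) h2
    simpa [← Matrix.mul_assoc, hLA] using this
  have hB'eq : B' = B * (g⁻¹)ᵀ := by
    rw [hginv]
    have h3 : B'ᵀ = k * Bᵀ := by
      rw [hBg, ← Matrix.mul_assoc, hkg, Matrix.one_mul]
    have := congrArg Matrix.transpose h3
    rwa [Matrix.transpose_mul, Matrix.transpose_transpose] at this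
  refine ⟨g, ⟨hunit, hAg, hB'eq⟩, ?_⟩
  rintro g₂ ⟨hu₂, hA₂, -⟩
  apply cancelA
  rw [← hA₂, ← hAg]
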